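/- Let γ_0(t) be an admissible curve and let γ_1(t) = f(γ_0(t)) = (ξ(t), η_1(t)). Suppose that for some t we have η̇_1(t) ≠ 0 and |ξ̇(t)/η̇_1(t)| < 1. Then the curvature of γ_1 at that point satisfies |κ_1(t)| > a/b ≫ 1. -/

import Mathlib

noncomputable section

open Set Filter Topology Function MeasureTheory Bornology

/-- Points of the plane. -/
abbrev Pt : Type := ℝ × ℝ

/-- The Euclidean norm of a vector of the plane. -/
def enorm2 (v : Pt) : ℝ := Real.sqrt (v.1 ^ 2 + v.2 ^ 2)

/-- The Euclidean distance between two points of the plane. -/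
def edist2 (z w : Pt) : ℝ := enorm2 (z - w)

/-- The Hénon map with parameters `a` and `b`. -/
def henon (a b : ℝ) (z : Pt) : Pt := (1 - a * z.1 ^ 2 + z.2, b * z.1)

/-- `f` is a Hénon-like map with parameters `a`, `b`: a `C²` plane diffeomorphism which is
an `η`-perturbation of the Hénon map `h_{a,b}` in the `C²` norm. -/
structure IsHenonLike (f : Pt → Pt) (a b η : ℝ) : Prop where
  bijective : Function.Bijective f
  contDiff : ContDiff ℝ 2 f
  pert0 : ∀ z, ‖f z - henon a b z‖ ≤ η
  pert1 : ∀ z, ‖fderiv ℝ (fun w => f w - henon a b w) z‖ ≤ η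
  pert2 : ∀ z, ‖fderiv ℝ (fderiv ℝ (fun w => f w - henon a b w)) z‖ ≤ η

/-- `f` is a Hénon-like family with parameter `b`: each `f a` is a plane diffeomorphism
and `(x,y,a) ↦ (f a)(x,y) - h_{a,b}(x,y)` is a `C²` perturbation of size at most `η` in
the `C²(x,y,a)` norm. -/
structure IsHenonLikeFamily (f : ℝ → Pt → Pt) (b η : ℝ) : Prop where
  bijective : ∀ a, Function.Bijective (f a)
  contDiff : ContDiff ℝ 2 fun w : ℝ × Pt => f w.1 w.2
  pert0 : ∀ w : ℝ × Pt, ‖f w.1 w.2 - henon w.1 b w.2‖ ≤ η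
  pert1 : ∀ w : ℝ × Pt, ‖fderiv ℝ (fun u : ℝ × Pt => f u.1 u.2 - henon u.1 b u.2) w‖ ≤ η
  pert2 : ∀ w : ℝ × Pt,
    ‖fderiv ℝ (fderiv ℝ (fun u : ℝ × Pt => f u.1 u.2 - henon u.1 b u.2)) w‖ ≤ η

/-- The nonwandering set of `f`. -/
def nonwanderingSet (f : Pt → Pt) : Set Pt :=
  {z | ∀ U ∈ 𝓝 z, ∃ n : ℕ, 1 ≤ n ∧ (f^[n] '' U ∩ U).Nonempty}

/-- The stable set `W^s(p)` of a fixed point `p` of `f`. -/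
def stableSet (f : Pt → Pt) (p : Pt) : Set Pt :=
  {z | Tendsto (fun n => f^[n] z) atTop (𝓝 p)}

/-- The unstable set `W^u(p)` of a fixed point `p` of `f` (via the inverse map). -/
def unstableSet (f : Pt → Pt) (p : Pt) : Set Pt :=
  {z | Tendsto (fun n => (Function.invFun f)^[n] z) atTop (𝓝 p)}

/-- `v` is a (nonzero) tangent vector to the set `W` at the point `z`: there is a curve
through `z` contained in `W` with velocity `v` at `z`. -/
def TangentVec (W : Set Pt) (z v : Pt) : Prop :=
  v ≠ 0 ∧ ∃ γ : ℝ → Pt, γ 0 = z ∧ (∀ t, γ t ∈ W) ∧ HasDerivAt γ v 0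

/-- `D` is a closed topological disc bounded by arcs of `W^u(p)` and `W^s(q)`. -/
def IsBoundingDisc (f : Pt → Pt) (p q : Pt) (D : Set Pt) : Prop :=
  IsCompact D ∧ Nonempty (↥D ≃ₜ ↥(Metric.closedBall (0 : Pt) 1)) ∧
    frontier D ⊆ unstableSet f p ∪ stableSet f q

/-- `p` and `q` are the hyperbolic fixed points of `f`, the continuations of the fixed
points `p* = (1/2, 0)` and `q* = (-1, 0)` of `h_{2,0}`. -/
def AreContinuationFixedPoints (f : Pt → Pt) (p q : Pt) : Prop :=
  f p = p ∧ f q = q ∧ edist2 p (1 / 2, 0) ≤ 1 / 10 ∧ edist2 q (-1, 0) ≤ 1 / 10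

/-- The ball `Q` of radius `δ = 1/10` around `q* = (-1, 0)` (Euclidean distance). -/
def Qball : Set Pt := {z | edist2 z (-1, 0) < 1 / 10}

/-- `V`: the connected component of `f⁻¹(Q)` containing `(1, 0)` (not meeting `Q`). -/
def Vcomp (f : Pt → Pt) : Set Pt := connectedComponentIn (f ⁻¹' Qball) (1, 0)

/-- `Q_n = ⋂_{i=0}^n f^{-i}(Q)`. -/
def Qn (f : Pt → Pt) (n : ℕ) : Set Pt := ⋂ i ∈ Finset.range (n + 1), f^[i] ⁻¹' Qball

/-- `V_n = f⁻¹(Q_n) ∩ V`. -/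
def Vn (f : Pt → Pt) (n : ℕ) : Set Pt := f ⁻¹' Qn f n ∩ Vcomp f

/-- `W^s_δ(q)`: the connected component containing `q` of `W^s(q) ∩ Q`. -/
def WsLoc (f : Pt → Pt) (q : Pt) : Set Pt := connectedComponentIn (stableSet f q ∩ Qball) q

/-- A vector is almost horizontal if its slope is less than `α = 1/2`. -/
def AlmostHorizontal (v : Pt) : Prop := |v.2| < (1 / 2) * |v.1|

/-- The curvature of a parametrized plane curve. -/
def curvature2 (γ : ℝ → Pt) (s : ℝ) : ℝ :=
  |(deriv γ s).1 * (deriv (deriv γ) s).2 - (deriv γ s).2 * (deriv (deriv γ) s).1| /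
    enorm2 (deriv γ s) ^ 3

/-- The critical neighbourhood `Δ_ε = (-ε, ε) × (-4b, 4b)`. -/
def critNbhd (b ε : ℝ) : Set Pt := Ioo (-ε) ε ×ˢ Ioo (-(4 * |b|)) (4 * |b|)

/-- `Δ = {z ∈ Δ_ε : f(z) ∉ D}`. -/
def DeltaSet (f : Pt → Pt) (D : Set Pt) (b ε : ℝ) : Set Pt :=
  {z ∈ critNbhd b ε | f z ∉ D}

/-- The maximal expansion (Euclidean operator norm) of a linear map of the plane. -/
def eopNorm (A : Pt →L[ℝ] Pt) : ℝ := ⨆ v : {v : Pt // enorm2 v = 1}, enorm2 (A ↑v)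

/-- The minimal expansion `‖A⁻¹‖⁻¹` of a linear map of the plane. -/
def eConorm (A : Pt →L[ℝ] Pt) : ℝ := ⨅ v : {v : Pt // enorm2 v = 1}, enorm2 (A ↑v)

/-- The orbit of `z` is unbounded either in forward or in backward time. -/
def EscapesForwardOrBackward (f : Pt → Pt) (z : Pt) : Prop :=
  ¬ IsBounded (Set.range fun n : ℕ => f^[n] z) ∨
    ¬ IsBounded (Set.range fun n : ℕ => (Function.invFun f)^[n] z)

/-- The compact invariant set `Λ` is uniformly hyperbolic for `f` with constants
`Cs, Cu > 0` and exponents `lams < 0 < lamu`: there is a continuous `Df`-invariant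
splitting with uniform contraction/expansion estimates. -/
def UniformlyHyperbolicWith (f : Pt → Pt) (Λ : Set Pt) (Cs Cu lams lamu : ℝ) : Prop :=
  IsCompact Λ ∧ f '' Λ = Λ ∧
    ∃ es eu : Pt → Pt,
      ContinuousOn es Λ ∧ ContinuousOn eu Λ ∧
      (∀ z ∈ Λ, LinearIndependent ℝ ![es z, eu z]) ∧
      (∀ z ∈ Λ, ∃ c : ℝ, fderiv ℝ f z (es z) = c • es (f z)) ∧
      (∀ z ∈ Λ, ∃ c : ℝ, fderiv ℝ f z (eu z) = c • eu (f z)) ∧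
      (∀ z ∈ Λ, ∀ n : ℕ, 1 ≤ n →
        enorm2 (fderiv ℝ (f^[n]) z (es z)) ≤ Cs * Real.exp (lams * n) * enorm2 (es z)) ∧
      (∀ z ∈ Λ, ∀ n : ℕ, 1 ≤ n →
        Cu * Real.exp (lamu * n) * enorm2 (eu z) ≤ enorm2 (fderiv ℝ (f^[n]) z (eu z)))

/-- There is a tangency at `z` between the stable manifold of `P` and the unstable
manifold of `Q`. -/
def HeteroclinicTangencyAt (f : Pt → Pt) (P Q z : Pt) : Prop :=
  ∃ v : Pt, TangentVec (stableSet f P) z v ∧ TangentVec (unstableSet f Q) z v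

/-- The stable manifold of `P` and the unstable manifold of `Q` intersect transversally
somewhere. -/
def TransversalIntersection (f : Pt → Pt) (P Q : Pt) : Prop :=
  ∃ z v w : Pt, TangentVec (stableSet f P) z v ∧ TangentVec (unstableSet f Q) z w ∧
    LinearIndependent ℝ ![v, w]

/-- The unstable manifold of `P` crosses the stable manifold of `P` (at least) four
times. -/
def CrossesFourTimes (f : Pt → Pt) (P : Pt) : Prop :=
  ∃ S : Finset Pt, S.card = 4 ∧ ↑S ⊆ unstableSet f P ∩ stableSet f P

/-- The bifurcation parameter `a*`: the infimum of the parameters for which the stable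
and unstable manifolds of the fixed points intersect transversally (`W^s(p)` and
`W^u(q)` in the orientation-reversing case `b > 0`; `W^s(q)` and `W^u(q)` in the
orientation-preserving case `b < 0`). -/
def aStar (f : ℝ → Pt → Pt) (p q : ℝ → Pt) (b : ℝ) : ℝ :=
  sInf {a | if 0 < b then TransversalIntersection (f a) (p a) (q a)
            else TransversalIntersection (f a) (q a) (q a)}

/-- The parameter `â`: the infimum of the parameters for which `W^u(p)` crosses
`W^s(p)` four times (`b > 0`), resp. `W^u(q)` crosses `W^s(q)` four times (`b < 0`). -/
def aHat (f : ℝ → Pt → Pt) (p q : ℝ → Pt) (b : ℝ) : ℝ :=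
  sInf {a | if 0 < b then CrossesFourTimes (f a) (p a) else CrossesFourTimes (f a) (q a)}

def V1 : Set Pt := {z | z.1 ≤ -2 ∧ z.2 ≤ |z.1|}
def V2 : Set Pt := {z | z.1 ≤ 2 ∧ z.2 ≤ -4}
def V3 : Set Pt := {z | 2 ≤ z.1 ∧ z.2 ≤ 2}
def V4 : Set Pt := {z | -2 ≤ z.1 ∧ 2 ≤ z.2}
def V5 : Set Pt := {z | z.1 ≤ -2 ∧ |z.1| ≤ z.2}
def V6 (b : ℝ) : Set Pt := {z | |z.1| ≤ 2 ∧ 4 * b ≤ z.2}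

/-- `C^+_N`: the maximal expansion of `Df^j` over `z ∈ D` and `1 ≤ j ≤ N`. -/
def Cplus (f : Pt → Pt) (D : Set Pt) (N : ℕ) : ℝ :=
  sSup {r | ∃ z ∈ D, ∃ j : ℕ, 1 ≤ j ∧ j ≤ N ∧ r = eopNorm (fderiv ℝ (f^[j]) z)}

/-- `C^-_N`: the minimal contraction `‖(Df^j)⁻¹‖⁻¹` over `z ∈ D` and `1 ≤ j ≤ N`. -/
def Cminus (f : Pt → Pt) (D : Set Pt) (N : ℕ) : ℝ :=
  sInf {r | ∃ z ∈ D, ∃ j : ℕ, 1 ≤ j ∧ j ≤ N ∧ r = eConorm (fderiv ℝ (f^[j]) z)}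

section CFAux
open ContinuousLinearMap

def cfE1 : Pt →L[ℝ] Pt := (fst ℝ ℝ ℝ).prod 0

def cfDH (a b : ℝ) (z : Pt) : Pt →L[ℝ] Pt :=
  (snd ℝ ℝ ℝ).prod (b • fst ℝ ℝ ℝ) + (-(2*a*z.1)) • cfE1

def cfDDH (a : ℝ) : Pt →L[ℝ] (Pt →L[ℝ] Pt) :=
  ((-(2*a)) • fst ℝ ℝ ℝ).smulRight cfE1

@[simp] lemma cfE1_apply (v : Pt) : cfE1 v = (v.1, 0) := rfl

@[simp] lemma cfDH_apply (a b : ℝ) (z v : Pt) :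
    cfDH a b z v = (v.2 - 2*a*z.1*v.1, b*v.1) := by
  simp [cfDH, Prod.ext_iff]; ring

@[simp] lemma cfDDH_apply (a : ℝ) (v w : Pt) :
    cfDDH a v w = (-(2*a)*v.1*w.1, 0) := by
  simp [cfDDH, Prod.ext_iff]

lemma henon_hasFDerivAt (a b : ℝ) (z : Pt) :
    HasFDerivAt (henon a b) (cfDH a b z) z := by
  have hx : HasFDerivAt (fun w : Pt => w.1) (fst ℝ ℝ ℝ) z := hasFDerivAt_fst
  have hy : HasFDerivAt (fun w : Pt => w.2) (snd ℝ ℝ ℝ) z := hasFDerivAt_snd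
  have h1 : HasFDerivAt (fun w : Pt => 1 - a*(w.1*w.1) + w.2)
      ((0 : Pt →L[ℝ] ℝ) - a • (z.1 • fst ℝ ℝ ℝ + z.1 • fst ℝ ℝ ℝ) + snd ℝ ℝ ℝ) z :=
    ((hasFDerivAt_const (1:ℝ) z).sub ((hx.mul hx).const_mul a)).add hy
  have h2 : HasFDerivAt (fun w : Pt => b * w.1) (b • fst ℝ ℝ ℝ) z := hx.const_mul b
  have h := h1.prodMk h2
  have heq : (fun w : Pt => (1 - a*(w.1*w.1) + w.2, b * w.1)) = henon a b := by
    funext w; simp only [henon, pow_two]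
  rw [heq] at h
  have hD : (0 - a • (z.1 • fst ℝ ℝ ℝ + z.1 • fst ℝ ℝ ℝ) + snd ℝ ℝ ℝ).prod (b • fst ℝ ℝ ℝ)
      = cfDH a b z := ContinuousLinearMap.ext fun v => Prod.ext (by simp; ring) (by simp)
  rwa [hD] at h

lemma cfDH_hasFDerivAt (a b : ℝ) (z : Pt) :
    HasFDerivAt (fun w => cfDH a b w) (cfDDH a) z := by
  have hc : HasFDerivAt (fun w : Pt => -(2*a*w.1)) ((-(2*a)) • fst ℝ ℝ ℝ) z := by
    have h0 : (fun w : Pt => -(2*a*w.1)) = fun w : Pt => (-(2*a)) * w.1 := by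
      funext w; ring
    rw [h0]
    exact (hasFDerivAt_fst : HasFDerivAt (fun w : Pt => w.1) (fst ℝ ℝ ℝ) z).const_mul (-(2*a))
  have h := ((hc.smul_const cfE1).const_add ((snd ℝ ℝ ℝ).prod (b • fst ℝ ℝ ℝ)))
  exact h

lemma cf_abs_sub (x y : ℝ) : |x - y| ≤ |x| + |y| := by
  calc |x - y| = |x + -y| := by rw [sub_eq_add_neg]
  _ ≤ |x| + |-y| := abs_add_le _ _
  _ = |x| + |y| := by rw [abs_neg]

def cfcross (u w : Pt) : ℝ := u.1 * w.2 - u.2 * w.1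

def cfdet (A : Pt →L[ℝ] Pt) : ℝ :=
  (A (1,0)).1 * (A (0,1)).2 - (A (0,1)).1 * (A (1,0)).2

lemma cfcross_map (A : Pt →L[ℝ] Pt) (u w : Pt) :
    cfcross (A u) (A w) = cfdet A * cfcross u w := by
  have key : ∀ p : Pt, A p = p.1 • A (1,0) + p.2 • A (0,1) := by
    intro p
    rw [← A.map_smul, ← A.map_smul, ← A.map_add]
    congr 1
    ext <;> simp
  rw [key u, key w]
  simp [cfcross, cfdet, Prod.smul_def, smul_eq_mul]
  ring

lemma enorm2_le (v : Pt) (r : ℝ) (h0 : 0 ≤ r) (h : v.1^2 + v.2^2 ≤ r^2) : enorm2 v ≤ r := by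
  rw [enorm2, show r = Real.sqrt (r^2) by rw [Real.sqrt_sq h0]]
  exact Real.sqrt_le_sqrt h

lemma fst_le_enorm2 (v : Pt) : |v.1| ≤ enorm2 v := by
  rw [enorm2, ← Real.sqrt_sq_eq_abs]
  exact Real.sqrt_le_sqrt (by nlinarith [sq_nonneg v.2])

lemma snd_le_enorm2 (v : Pt) : |v.2| ≤ enorm2 v := by
  rw [enorm2, ← Real.sqrt_sq_eq_abs]
  exact Real.sqrt_le_sqrt (by nlinarith [sq_nonneg v.1])

end CFAux

set_option maxHeartbeats 1000000 in
/-- **Lemma (folds have large curvature).** Let `γ₀` be an admissible curve and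
`γ₁ = f ∘ γ₀ = (ξ, η₁)`. If at some `t` we have `η̇₁(t) ≠ 0` and `|ξ̇(t)/η̇₁(t)| < 1`,
then `|κ₁(t)| > a/b ≫ 1`. -/
theorem curvature_at_folds :
    ∃ ε0 : ℝ, 0 < ε0 ∧
      ∀ a b η : ℝ, |a - 2| ≤ ε0 → 0 < |b| → |b| ≤ ε0 → 0 ≤ η → η ≤ ε0 →
        4 * η * (1 + 1 / 2) < |b| →
        ∀ f : Pt → Pt, IsHenonLike f a b η →
          ∀ γ : ℝ → Pt, ContDiff ℝ 2 γ →
            (∀ s : ℝ, AlmostHorizontal (deriv γ s) ∧ curvature2 γ s < 1 / 2) →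
            ∀ t : ℝ, (deriv (f ∘ γ) t).2 ≠ 0 →
              |(deriv (f ∘ γ) t).1| < |(deriv (f ∘ γ) t).2| →
              a / |b| < curvature2 (f ∘ γ) t := by

  refine ⟨1/100, by norm_num, ?_⟩
  intro a b η ha hb0 hb hη0 hη hηb f hf γ hγ hadm t hne hlt
  have hc6 : 6 * η ≤ |b| := by nlinarith
  have ha1 : (199:ℝ)/100 ≤ a := by
    have := abs_le.mp ha; linarith [this.1]
  have ha2 : a ≤ (201:ℝ)/100 := by
    have := abs_le.mp ha; linarith [this.2]
  have ha0 : (0:ℝ) < a := by linarith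
  -- differentiability facts
  have hfd : Differentiable ℝ f := hf.contDiff.differentiable (by norm_num)
  have hfd1 : ContDiff ℝ 1 (fderiv ℝ f) := hf.contDiff.fderiv_right (by norm_num)
  have hfdd : Differentiable ℝ (fderiv ℝ f) := hfd1.differentiable (by norm_num)
  have hγd : Differentiable ℝ γ := hγ.differentiable (by norm_num)
  have hγ1 : ContDiff ℝ 1 (deriv γ) := by
    have h2 : ContDiff ℝ (1+1 : ℕ) γ := by exact_mod_cast hγ
    exact ((contDiff_succ_iff_deriv (n := 1)).mp (by exact_mod_cast h2)).2.2
  have hvd : Differentiable ℝ (deriv γ) := hγ1.differentiable (by norm_num)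
  have hvs : ∀ s, HasDerivAt γ (deriv γ s) s := fun s => (hγd s).hasDerivAt
  have hcomp : ∀ s, HasDerivAt (f ∘ γ) (fderiv ℝ f (γ s) (deriv γ s)) s :=
    fun s => (hfd (γ s)).hasFDerivAt.comp_hasDerivAt s (hvs s)
  have hd1 : deriv (f ∘ γ) = fun s => fderiv ℝ f (γ s) (deriv γ s) :=
    funext fun s => (hcomp s).deriv
  set z := γ t with hzdef
  set v := deriv γ t with hvdef
  set w := deriv (deriv γ) t with hwdef
  set A := fderiv ℝ f z with hAdef
  set B := fderiv ℝ (fderiv ℝ f) z with hBdef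
  have hAder : HasDerivAt (fun s => fderiv ℝ f (γ s)) (B v) t :=
    (hfdd z).hasFDerivAt.comp_hasDerivAt t (hvs t)
  have hd2' : HasDerivAt (fun s => fderiv ℝ f (γ s) (deriv γ s)) (B v v + A w) t :=
    hAder.clm_apply ((hvd t).hasDerivAt)
  have hd1t : deriv (f ∘ γ) t = A v := by rw [hd1]
  have hd2 : deriv (deriv (f ∘ γ)) t = B v v + A w := by
    rw [hd1]; exact hd2'.deriv
  -- perturbation pieces
  set P := A - cfDH a b z with hPdef
  set P2 := B - cfDDH a with hP2def
  have hgd : ∀ z', fderiv ℝ (fun u => f u - henon a b u) z' = fderiv ℝ f z' - cfDH a b z' := by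
    intro z'
    rw [fderiv_fun_sub (hfd z') (henon_hasFDerivAt a b z').differentiableAt,
      (henon_hasFDerivAt a b z').fderiv]
  have hP : ‖P‖ ≤ η := by
    have h := hf.pert1 z; rwa [hgd z] at h
  have hP2n : ‖P2‖ ≤ η := by
    have h1 : (fderiv ℝ (fun u => f u - henon a b u)) = fun z' => fderiv ℝ f z' - cfDH a b z' :=
      funext hgd
    have h := hf.pert2 z
    rw [h1, fderiv_fun_sub (hfdd z) (cfDH_hasFDerivAt a b z).differentiableAt,
      (cfDH_hasFDerivAt a b z).fderiv] at h
    exact h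
  have hAp : ∀ p : Pt, A p = (p.2 - 2*a*z.1*p.1 + (P p).1, b*p.1 + (P p).2) := by
    intro p
    have h1 : A p = cfDH a b z p + P p := by
      simp [hPdef, ContinuousLinearMap.sub_apply]
    rw [h1, cfDH_apply]
    rw [Prod.ext_iff]
    exact ⟨by rw [Prod.fst_add], by rw [Prod.snd_add]⟩
  have hBvv : B v v = cfDDH a v v + P2 v v := by
    simp [hP2def, ContinuousLinearMap.sub_apply]
  -- admissibility at t
  have hah : |v.2| < 1/2 * |v.1| := (hadm t).1
  have hcurv0 : |cfcross v w| / enorm2 v ^ 3 < 1/2 := by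
    have h := (hadm t).2
    rw [curvature2] at h
    exact h
  clear_value z v w A B P P2
  clear hvs hcomp hd1 hAder hd2' hgd hfd hfd1 hfdd hγd hγ1 hvd hγ hf hadm hne
  set X := |v.1| with hXdef
  clear_value X
  have hX : 0 < X := by
    have h0 := abs_nonneg v.2
    linarith
  have hnv : ‖v‖ = X := by
    rw [Prod.norm_def, Real.norm_eq_abs, Real.norm_eq_abs, max_eq_left, hXdef]
    rw [← hXdef]
    linarith
  -- perturbation component bounds
  have hPv : ‖P v‖ ≤ η * X := by
    calc ‖P v‖ ≤ ‖P‖ * ‖v‖ := P.le_opNorm v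
    _ ≤ η * X := by rw [hnv]; exact mul_le_mul_of_nonneg_right hP hX.le
  have hp1 : |(P v).1| ≤ η * X :=
    le_trans (by rw [← Real.norm_eq_abs]; exact norm_fst_le (P v)) hPv
  have hp2 : |(P v).2| ≤ η * X :=
    le_trans (by rw [← Real.norm_eq_abs]; exact norm_snd_le (P v)) hPv
  have hetaX : η * X ≤ |b|/6 * X := mul_le_mul_of_nonneg_right (by linarith) hX.le
  have hbX : |b| * X ≤ 1/100 * X := mul_le_mul_of_nonneg_right hb hX.le
  have hq : ‖P2 v v‖ ≤ η * X^2 := by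
    calc ‖P2 v v‖ ≤ ‖P2 v‖ * ‖v‖ := (P2 v).le_opNorm v
    _ ≤ (‖P2‖ * ‖v‖) * ‖v‖ :=
        mul_le_mul_of_nonneg_right (P2.le_opNorm v) (norm_nonneg v)
    _ ≤ η * X^2 := by
        rw [hnv]
        have : ‖P2‖ * X ≤ η * X := mul_le_mul_of_nonneg_right hP2n hX.le
        have h2 : (‖P2‖ * X) * X ≤ (η * X) * X := mul_le_mul_of_nonneg_right this hX.le
        calc ‖P2‖ * X * X ≤ η * X * X := h2
        _ = η * X^2 := by ring
  have hq1 : |(P2 v v).1| ≤ η * X^2 :=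
    le_trans (by rw [← Real.norm_eq_abs]; exact norm_fst_le (P2 v v)) hq
  have hq2 : |(P2 v v).2| ≤ η * X^2 :=
    le_trans (by rw [← Real.norm_eq_abs]; exact norm_snd_le (P2 v v)) hq
  have hone : ‖((1:ℝ),(0:ℝ))‖ = 1 := by
    simp [Prod.norm_def]
  have hone' : ‖((0:ℝ),(1:ℝ))‖ = 1 := by
    simp [Prod.norm_def]
  have hr : ‖P (1,0)‖ ≤ η := by
    calc ‖P (1,0)‖ ≤ ‖P‖ * ‖((1:ℝ),(0:ℝ))‖ := P.le_opNorm _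
    _ ≤ η := by rw [hone, mul_one]; exact hP
  have hs : ‖P (0,1)‖ ≤ η := by
    calc ‖P (0,1)‖ ≤ ‖P‖ * ‖((0:ℝ),(1:ℝ))‖ := P.le_opNorm _
    _ ≤ η := by rw [hone', mul_one]; exact hP
  have hr1 : |(P (1,0)).1| ≤ η :=
    le_trans (by rw [← Real.norm_eq_abs]; exact norm_fst_le _) hr
  have hr2 : |(P (1,0)).2| ≤ η :=
    le_trans (by rw [← Real.norm_eq_abs]; exact norm_snd_le _) hr
  have hs1 : |(P (0,1)).1| ≤ η :=
    le_trans (by rw [← Real.norm_eq_abs]; exact norm_fst_le _) hs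
  have hs2 : |(P (0,1)).2| ≤ η :=
    le_trans (by rw [← Real.norm_eq_abs]; exact norm_snd_le _) hs
  -- components of A v
  have hAv1 : (A v).1 = v.2 - 2*a*z.1*v.1 + (P v).1 := by rw [hAp v]
  have hAv2 : (A v).2 = b*v.1 + (P v).2 := by rw [hAp v]
  set m := |(A v).2| with hmdef
  clear_value m
  -- bounds on m
  have hbv : |b * v.1| = |b| * X := by rw [abs_mul, ← hXdef]
  have hm_lo : 5/6 * (|b| * X) ≤ m := by
    have h1 := abs_sub_abs_le_abs_sub (b*v.1) (-(P v).2)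
    rw [abs_neg, sub_neg_eq_add] at h1
    rw [hmdef, hAv2]
    linarith [h1, hbv.le, hbv.ge, hp2, hetaX]
  have hm_hi : m ≤ 7/6 * (|b| * X) := by
    rw [hmdef, hAv2]
    calc |b*v.1 + (P v).2| ≤ |b*v.1| + |(P v).2| := abs_add_le _ _
    _ ≤ 7/6 * (|b| * X) := by rw [hbv]; linarith [hp2, hetaX]
  have hm0 : 0 < m := by linarith [hm_lo, mul_pos hb0 hX]
  -- rewrite hypotheses at t
  rw [hd1t] at hlt
  -- bound on |2 a z.1|
  have h2ax : |2*a*z.1| ≤ 1 := by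
    have key : 2*a*z.1*v.1 = v.2 + (P v).1 - (A v).1 := by rw [hAv1]; ring
    have h1 : |2*a*z.1*v.1| ≤ |v.2| + |(P v).1| + |(A v).1| := by
      rw [key]
      calc |v.2 + (P v).1 - (A v).1| ≤ |v.2 + (P v).1| + |(A v).1| := cf_abs_sub _ _
      _ ≤ |v.2| + |(P v).1| + |(A v).1| := by
            have := abs_add_le v.2 ((P v).1); linarith
    rw [abs_mul, ← hXdef] at h1
    have h2 : |2*a*z.1| * X ≤ 1 * X := by
      have hAv1m : |(A v).1| ≤ m := by rw [hmdef]; exact le_of_lt hlt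
      linarith [h1, hah, hp1, hetaX, hm_hi, hbX, hAv1m]
    exact le_of_mul_le_mul_right h2 hX
  -- determinant bound
  have hdet : |cfdet A| ≤ 3/2 * |b| := by
    have he1 : A (1,0) = ((0:ℝ) - 2*a*z.1*1 + (P (1,0)).1, b*1 + (P (1,0)).2) := by
      rw [hAp (1,0)]
    have he2 : A (0,1) = ((1:ℝ) - 2*a*z.1*0 + (P (0,1)).1, b*0 + (P (0,1)).2) := by
      rw [hAp (0,1)]
    rw [cfdet, he1, he2]
    have hb1 : |0 - 2*a*z.1*1 + (P (1,0)).1| ≤ 1 + η := by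
      calc |0 - 2*a*z.1*1 + (P (1,0)).1| ≤ |0 - 2*a*z.1*1| + |(P (1,0)).1| := abs_add_le _ _
      _ ≤ 1 + η := by
          have : |0 - 2*a*z.1*1| = |2*a*z.1| := by rw [show (0:ℝ) - 2*a*z.1*1 = -(2*a*z.1) by ring, abs_neg]
          rw [this]; linarith
    have hb2 : |1 - 2*a*z.1*0 + (P (0,1)).1| ≤ 1 + η := by
      have : |1 - 2*a*z.1*0 + (P (0,1)).1| = |1 + (P (0,1)).1| := by ring_nf
      rw [this]
      calc |1 + (P (0,1)).1| ≤ |(1:ℝ)| + |(P (0,1)).1| := abs_add_le _ _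
      _ ≤ 1 + η := by rw [abs_one]; linarith
    have hb3 : |b*1 + (P (1,0)).2| ≤ |b| + η := by
      calc |b*1 + (P (1,0)).2| ≤ |b*1| + |(P (1,0)).2| := abs_add_le _ _
      _ ≤ |b| + η := by rw [mul_one]; linarith
    have hb4 : |b*0 + (P (0,1)).2| ≤ η := by
      have : b*0 + (P (0,1)).2 = (P (0,1)).2 := by ring
      rw [this]; exact hs2
    calc |(0 - 2*a*z.1*1 + (P (1,0)).1) * (b*0 + (P (0,1)).2)
          - (1 - 2*a*z.1*0 + (P (0,1)).1) * (b*1 + (P (1,0)).2)|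
        ≤ |(0 - 2*a*z.1*1 + (P (1,0)).1) * (b*0 + (P (0,1)).2)|
          + |(1 - 2*a*z.1*0 + (P (0,1)).1) * (b*1 + (P (1,0)).2)| := cf_abs_sub _ _
    _ = |0 - 2*a*z.1*1 + (P (1,0)).1| * |b*0 + (P (0,1)).2|
          + |1 - 2*a*z.1*0 + (P (0,1)).1| * |b*1 + (P (1,0)).2| := by
          rw [abs_mul, abs_mul]
    _ ≤ (1 + η) * η + (1 + η) * (|b| + η) := by
          have t1 : |0 - 2*a*z.1*1 + (P (1,0)).1| * |b*0 + (P (0,1)).2| ≤ (1+η) * η :=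
            mul_le_mul hb1 hb4 (abs_nonneg _) (by linarith)
          have t2 : |1 - 2*a*z.1*0 + (P (0,1)).1| * |b*1 + (P (1,0)).2| ≤ (1+η) * (|b|+η) :=
            mul_le_mul hb2 hb3 (abs_nonneg _) (by linarith)
          linarith
    _ ≤ 3/2 * |b| := by
        have e1 : (1+η) * η ≤ (101/100) * (|b|/6) :=
          mul_le_mul (by linarith) (by linarith) hη0 (by norm_num)
        have e2 : (1+η) * (|b|+η) ≤ (101/100) * (7/6*|b|) :=
          mul_le_mul (by linarith) (by linarith) (by positivity) (by norm_num)
        linarith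
  -- curvature of γ at t
  have hXle : X ≤ enorm2 v := by rw [hXdef]; exact fst_le_enorm2 v
  have hev : 0 < enorm2 v := lt_of_lt_of_le hX hXle
  have hev_hi : enorm2 v ≤ 9/8 * X := by
    apply enorm2_le _ _ (by positivity)
    have hv2 : v.2^2 ≤ (1/2*X)^2 := by
      rw [← sq_abs v.2]
      exact pow_le_pow_left₀ (abs_nonneg _) (by linarith) 2
    have hx2 : v.1^2 = X^2 := by rw [hXdef, sq_abs]
    linarith [hv2, hx2.le, hx2.ge, sq_nonneg X]
  have hcr : |cfcross v w| ≤ 1/2 * (9/8 * X)^3 := by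
    have h0 : |cfcross v w| < 1/2 * enorm2 v ^ 3 :=
      (div_lt_iff₀ (pow_pos hev 3)).mp hcurv0
    have h1 : enorm2 v ^ 3 ≤ (9/8 * X)^3 := pow_le_pow_left₀ (le_of_lt hev) hev_hi 3
    linarith
  -- cross product decomposition
  have hcrossw1 : cfcross (A v) (B v v + A w)
      = cfdet A * cfcross v w + 2*a*v.1^2*(A v).2 + cfcross (A v) (P2 v v) := by
    rw [hBvv]
    have h1 : cfcross (A v) (cfDDH a v v + P2 v v + A w)
        = cfcross (A v) (A w) + cfcross (A v) (cfDDH a v v) + cfcross (A v) (P2 v v) := by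
      simp only [cfcross, Prod.fst_add, Prod.snd_add]; ring
    rw [h1, cfcross_map, cfDDH_apply]
    simp only [cfcross]
    ring
  -- numerator lower bound
  have hAvm : |(A v).1| ≤ m := by rw [hmdef]; exact le_of_lt hlt
  have hX2 : v.1^2 = X^2 := by rw [hXdef, sq_abs]
  have hmain : 2*(199/100)*(X^2*(5/6*(|b| * X))) ≤ |2*a*v.1^2*(A v).2| := by
    rw [abs_mul, abs_of_nonneg (by positivity : (0:ℝ) ≤ 2*a*v.1^2), hX2, ← hmdef]
    have e1 : X^2*(5/6*(|b| * X)) ≤ X^2 * m := mul_le_mul_of_nonneg_left hm_lo (sq_nonneg X)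
    have e2 : (199/100) * (X^2 * m) ≤ a * (X^2 * m) :=
      mul_le_mul_of_nonneg_right ha1 (mul_nonneg (sq_nonneg X) hm0.le)
    linarith [e1, e2]
  have hQ : |cfcross (A v) (P2 v v)| ≤ 2*m*(η*X^2) := by
    rw [cfcross]
    calc |(A v).1 * (P2 v v).2 - (A v).2 * (P2 v v).1|
        ≤ |(A v).1 * (P2 v v).2| + |(A v).2 * (P2 v v).1| := cf_abs_sub _ _
    _ = |(A v).1| * |(P2 v v).2| + |(A v).2| * |(P2 v v).1| := by rw [abs_mul, abs_mul]
    _ ≤ 2*m*(η*X^2) := by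
        have t1 : |(A v).1| * |(P2 v v).2| ≤ m * (η*X^2) :=
          mul_le_mul hAvm hq2 (abs_nonneg _) (by positivity)
        have t2 : |(A v).2| * |(P2 v v).1| ≤ m * (η*X^2) :=
          mul_le_mul hmdef.ge hq1 (abs_nonneg _) hm0.le
        linarith
  have hDcr : |cfdet A * cfcross v w| ≤ (3/2*|b|) * (1/2 * (9/8*X)^3) := by
    rw [abs_mul]
    exact mul_le_mul hdet hcr (abs_nonneg _) (by positivity)
  have habs3 : ∀ x y u : ℝ, |y| - |x| - |u| ≤ |x + y + u| := by
    intro x y u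
    have h1 : |y| ≤ |x + y + u| + |x| + |u| := by
      calc |y| = |(x + y + u) - x - u| := by rw [show x + y + u - x - u = y by ring]
      _ ≤ |(x + y + u) - x| + |u| := cf_abs_sub _ _
      _ ≤ |x + y + u| + |x| + |u| := by linarith [cf_abs_sub (x+y+u) x]
    linarith
  have hN : 2 * (|b| * X^3) ≤ |cfcross (A v) (B v v + A w)| := by
    rw [hcrossw1]
    have h1 := habs3 (cfdet A * cfcross v w) (2*a*v.1^2*(A v).2) (cfcross (A v) (P2 v v))
    have hQ' : 2*m*(η*X^2) ≤ 2*(7/6*(|b| * X))*((|b|/6)*X^2) := by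
      have f1 : η * X^2 ≤ |b|/6 * X^2 := mul_le_mul_of_nonneg_right (by linarith) (sq_nonneg X)
      have f0 : m * (η*X^2) ≤ (7/6*(|b| * X)) * (|b|/6*X^2) :=
        mul_le_mul hm_hi f1 (by positivity) (by positivity)
      linarith
    have f2 : |b| * (|b| * X^3) ≤ (1/100)*(|b| * X^3) :=
      mul_le_mul_of_nonneg_right hb (by positivity)
    linarith [h1, hmain, hDcr, hQ, hQ', f2, mul_pos hb0 (pow_pos hX 3)]
  -- norm of A v
  have hKlo : m ≤ enorm2 (A v) := by rw [hmdef]; exact snd_le_enorm2 (A v)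
  have hK0 : 0 < enorm2 (A v) := lt_of_lt_of_le hm0 hKlo
  have hKhi : enorm2 (A v) ≤ 3/2 * m := by
    apply enorm2_le _ _ (by positivity)
    have g1 : |(A v).1| ^ 2 ≤ m^2 := pow_le_pow_left₀ (abs_nonneg _) hAvm 2
    have g2 : |(A v).2| ^ 2 = m^2 := by rw [hmdef]
    linarith [g1, g2.le, g2.ge, sq_abs (A v).1, sq_abs (A v).2, sq_nonneg m]
  -- final assembly
  have hcurv_eq : curvature2 (f ∘ γ) t
      = |cfcross (A v) (B v v + A w)| / enorm2 (A v) ^ 3 := by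
    rw [curvature2, hd1t, hd2]
    rfl
  rw [hcurv_eq, div_lt_div_iff₀ hb0 (pow_pos hK0 3)]
  have hK3 : enorm2 (A v)^3 ≤ (3/2*m)^3 :=
    pow_le_pow_left₀ (le_of_lt hK0) hKhi 3
  have hm3 : m^3 ≤ (7/6*(|b| * X))^3 :=
    pow_le_pow_left₀ hm0.le hm_hi 3
  have step1 : a * enorm2 (A v)^3 ≤ (201/100) * (3/2*m)^3 :=
    mul_le_mul ha2 hK3 (by positivity) (by norm_num)
  have step2 : (201/100) * (3/2*m)^3 ≤ (201/100) * ((3/2)^3 * (7/6*(|b| * X))^3) := by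
    rw [mul_pow]
    linarith [hm3]
  have hbX3 : 0 < |b|^2 * X^3 := by positivity
  have step3 : (201/100) * ((3/2)^3 * (7/6*(|b| * X))^3) < 2 * (|b| * X^3) * |b| := by
    have hexp : (7/6*(|b| * X))^3 = (343/216) * (|b|^3 * X^3) := by ring
    rw [hexp]
    have f3 : |b| * (|b|^2*X^3) ≤ (1/100)*(|b|^2*X^3) :=
      mul_le_mul_of_nonneg_right hb (by positivity)
    linarith [f3, hbX3]
  have step4 : 2 * (|b| * X^3) * |b| ≤ |cfcross (A v) (B v v + A w)| * |b| :=
    mul_le_mul_of_nonneg_right hN (abs_nonneg b)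
  linarith
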